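/- Let F be a distribution belonging to the class OS, i.e., \bar{F}(x) > 0 for all x and limsup_{x→∞} \overline{F^{*2}}(x)/\bar{F}(x) < ∞. Then F is long-tailed if and only if F^{*2} = F * F is long-tailed. -/

import Mathlib

open MeasureTheory Filter Set Asymptotics

/-- Tail function of a distribution: `F̄(x) = μ(x, ∞)`. -/
noncomputable def tail (μ : Measure ℝ) (x : ℝ) : ℝ := (μ (Set.Ioi x)).toReal

/-- `F(a, b] = F(b) - F(a)`. -/
noncomputable def intv (μ : Measure ℝ) (a b : ℝ) : ℝ := (μ (Set.Ioc a b)).toReal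

/-- A distribution is long-tailed if `F̄(x+1)/F̄(x) → 1` as `x → ∞`. -/
def LongTailed (μ : Measure ℝ) : Prop :=
  Tendsto (fun x => tail μ (x + 1) / tail μ x) atTop (nhds 1)

/-- Convolution of two distributions on ℝ (law of the sum of independent rvs). -/
noncomputable def mconv (μ ν : Measure ℝ) : Measure ℝ :=
  Measure.map (fun p : ℝ × ℝ => p.1 + p.2) (μ.prod ν)

/-- `n`-fold convolution of a distribution with itself; `nconv μ 0` is the unit mass at 0. -/
noncomputable def nconv (μ : Measure ℝ) : ℕ → Measure ℝ
  | 0 => Measure.dirac 0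
  | n + 1 => mconv (nconv μ n) μ

/-- The class OS of generalised subexponential distributions: everywhere positive tail
and limsup of tail(F*F)/tail(F) finite (i.e. an eventual linear bound). -/
def OSClass (μ : Measure ℝ) : Prop :=
  (∀ x, 0 < tail μ x) ∧ ∃ M : ℝ, ∀ᶠ x in atTop, tail (mconv μ μ) x ≤ M * tail μ x

/- ### Auxiliary lemmas -/

lemma measurable_addfun : Measurable (fun p : ℝ × ℝ => p.1 + p.2) :=
  measurable_fst.add measurable_snd

instance mconv_prob (μ ν : Measure ℝ) [IsProbabilityMeasure μ] [IsProbabilityMeasure ν] :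
    IsProbabilityMeasure (mconv μ ν) :=
  Measure.isProbabilityMeasure_map measurable_addfun.aemeasurable

lemma mconv_apply (μ ν : Measure ℝ) [SFinite μ] [SFinite ν] {s : Set ℝ} (hs : MeasurableSet s) :
    mconv μ ν s = (μ.prod ν) ((fun p : ℝ × ℝ => p.1 + p.2) ⁻¹' s) :=
  Measure.map_apply measurable_addfun hs

lemma tail_antitone (μ : Measure ℝ) [IsFiniteMeasure μ] : Antitone (tail μ) := by
  intro a b hab
  exact ENNReal.toReal_mono (measure_ne_top _ _) (measure_mono (Ioi_subset_Ioi hab))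

lemma tail_eq_intv_add (μ : Measure ℝ) [IsFiniteMeasure μ] {a b : ℝ} (hab : a ≤ b) :
    tail μ a = intv μ a b + tail μ b := by
  have h : Set.Ioi a = Set.Ioc a b ∪ Set.Ioi b := (Set.Ioc_union_Ioi_eq_Ioi hab).symm
  rw [tail, h, measure_union Set.Ioc_disjoint_Ioi_same measurableSet_Ioi,
    ENNReal.toReal_add (measure_ne_top _ _) (measure_ne_top _ _)]
  rfl

lemma intv_split (μ : Measure ℝ) [IsFiniteMeasure μ] {a b c : ℝ} (hab : a ≤ b) (hbc : b ≤ c) :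
    intv μ a c = intv μ a b + intv μ b c := by
  rw [intv, ← Set.Ioc_union_Ioc_eq_Ioc hab hbc,
    measure_union (Set.Ioc_disjoint_Ioc_of_le le_rfl) measurableSet_Ioc,
    ENNReal.toReal_add (measure_ne_top _ _) (measure_ne_top _ _)]
  rfl

lemma intv_nonneg (μ : Measure ℝ) (a b : ℝ) : 0 ≤ intv μ a b := ENNReal.toReal_nonneg
lemma tail_nonneg (μ : Measure ℝ) (a : ℝ) : 0 ≤ tail μ a := ENNReal.toReal_nonneg

/-- rectangle lower bound for convolution tail -/
lemma tail_mconv_ge (F : Measure ℝ) [IsProbabilityMeasure F] (a b : ℝ) :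
    tail F a * tail F b ≤ tail (mconv F F) (a + b) := by
  rw [tail, tail, tail, mconv_apply _ _ measurableSet_Ioi, ← ENNReal.toReal_mul]
  refine ENNReal.toReal_mono (measure_ne_top _ _) ?_
  rw [← Measure.prod_prod]
  refine measure_mono ?_
  rintro ⟨u, v⟩ ⟨hu, hv⟩
  exact add_lt_add (Set.mem_Ioi.mp hu) (Set.mem_Ioi.mp hv)

/-- rectangle lower bound for convolution interval -/
lemma intv_mconv_ge (F : Measure ℝ) [IsProbabilityMeasure F] (a b c d : ℝ) :
    intv F a b * intv F c d ≤ intv (mconv F F) (a + c) (b + d) := by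
  rw [intv, intv, intv, mconv_apply _ _ measurableSet_Ioc, ← ENNReal.toReal_mul]
  refine ENNReal.toReal_mono (measure_ne_top _ _) ?_
  rw [← Measure.prod_prod]
  refine measure_mono ?_
  rintro ⟨u, v⟩ ⟨⟨hu1, hu2⟩, hv1, hv2⟩
  exact ⟨add_lt_add hu1 hv1, add_le_add hu2 hv2⟩

/-- existence of a small interval with positive mass in the positive half line -/
lemma exists_pos_intv (F : Measure ℝ) [IsProbabilityMeasure F] (hpos : 0 < tail F 0) :
    ∃ a : ℝ, 0 ≤ a ∧ 0 < intv F a (a + 1/2) := by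
  by_contra h
  push_neg at h
  have hz : ∀ n : ℕ, F (Set.Ioc ((n:ℝ)/2) ((n:ℝ)/2 + 1/2)) = 0 := by
    intro n
    have h1 := h ((n:ℝ)/2) (by positivity)
    have h2 := intv_nonneg F ((n:ℝ)/2) ((n:ℝ)/2 + 1/2)
    have : intv F ((n:ℝ)/2) ((n:ℝ)/2 + 1/2) = 0 := le_antisymm h1 h2
    rw [intv] at this
    exact (ENNReal.toReal_eq_zero_iff _).mp this |>.resolve_right (measure_ne_top _ _)
  have hcover : Set.Ioi (0:ℝ) ⊆ ⋃ n : ℕ, Set.Ioc ((n:ℝ)/2) ((n:ℝ)/2 + 1/2) := by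
    intro x hx
    simp only [Set.mem_Ioi] at hx
    have h2x : (0:ℝ) < 2 * x := by linarith
    refine Set.mem_iUnion.mpr ⟨(⌈2*x⌉ - 1).toNat, ?_⟩
    have hc1 : (1:ℤ) ≤ ⌈2*x⌉ := by
      exact_mod_cast Int.ceil_pos.mpr h2x
    have hcast : ((((⌈2*x⌉ - 1).toNat : ℕ) : ℝ)) = (⌈2*x⌉ : ℝ) - 1 := by
      have h' : ((⌈2*x⌉ - 1).toNat : ℤ) = ⌈2*x⌉ - 1 := Int.toNat_of_nonneg (by omega)
      exact_mod_cast congrArg (Int.cast : ℤ → ℝ) h'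
    constructor
    · rw [hcast]
      have := Int.ceil_lt_add_one (2*x)
      linarith
    · rw [hcast]
      have := Int.le_ceil (2*x)
      linarith
  have : F (Set.Ioi (0:ℝ)) = 0 := by
    refine measure_mono_null hcover ?_
    exact measure_iUnion_null hz
  rw [tail, this] at hpos
  simp at hpos

lemma longTailed_iff (μ : Measure ℝ) [IsFiniteMeasure μ] (h : ∀ x, 0 < tail μ x) :
    LongTailed μ ↔ Tendsto (fun x => intv μ x (x + 1) / tail μ x) atTop (nhds 0) := by
  have key : ∀ x : ℝ, intv μ x (x + 1) / tail μ x = 1 - tail μ (x + 1) / tail μ x := by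
    intro x
    have h1 := tail_eq_intv_add μ (show x ≤ x + 1 by linarith)
    have h2 := (h x).ne'
    field_simp
    linarith
  constructor
  · intro hLT
    have := hLT.const_sub 1
    simp only [sub_self] at this
    exact this.congr (fun x => (key x).symm)
  · intro h0
    have := h0.const_sub 1
    simp only [sub_zero] at this
    refine this.congr (fun x => ?_)
    rw [key x]; ring

lemma tail_shift (μ : Measure ℝ) [IsFiniteMeasure μ] (h : ∀ x, 0 < tail μ x)
    (hLT : LongTailed μ) (k : ℕ) :
    Tendsto (fun x => tail μ x / tail μ (x - k)) atTop (nhds 1) := by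
  induction k with
  | zero =>
    simp only [Nat.cast_zero, sub_zero]
    have : (fun x : ℝ => tail μ x / tail μ x) = fun _ => (1:ℝ) := by
      funext x; exact div_self (h x).ne'
    rw [this]; exact tendsto_const_nhds
  | succ k ih =>
    have hcomp : Tendsto (fun x : ℝ => tail μ (x - k) / tail μ (x - (k+1:ℕ))) atTop (nhds 1) := by
      have := hLT.comp (tendsto_atTop_add_const_right atTop (-(k+1:ℝ)) tendsto_id)
      refine this.congr (fun x => ?_)
      simp only [Function.comp_apply, id_eq]
      have e1 : x + -((k:ℝ)+1) + 1 = x - k := by ring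
      have e2 : x + -((k:ℝ)+1) = x - ((k+1:ℕ):ℝ) := by push_cast; ring
      rw [e1, e2]
    have := ih.mul hcomp
    rw [one_mul] at this
    refine this.congr (fun x => ?_)
    have hb := (h (x - (k:ℝ))).ne'
    have hc := (h (x - ((k+1:ℕ):ℝ))).ne'
    field_simp

lemma conv_intv_bound (F : Measure ℝ) [IsProbabilityMeasure F] {ε : ℝ} {T : ℝ}
    (hT : ∀ t, T ≤ t → F (Set.Ioc t (t+1)) ≤ ENNReal.ofReal ε * F (Set.Ioi t))
    {x : ℝ} (hx : 2*T + 1 ≤ x) :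
    (mconv F F) (Set.Ioc x (x+1)) ≤
      ENNReal.ofReal ε * ((mconv F F) (Set.Ioi x) + F (Set.Ioi (x - T - 1))) := by
  set P := F.prod F with hP
  set add := fun p : ℝ × ℝ => p.1 + p.2 with hadd
  have hSmeas : MeasurableSet (add ⁻¹' Set.Ioc x (x+1)) :=
    measurable_addfun measurableSet_Ioc
  set S := add ⁻¹' Set.Ioc x (x+1) with hS
  set S₁ := S ∩ {p : ℝ × ℝ | p.1 ≤ x - T} with hS₁
  set S₂ := S ∩ {p : ℝ × ℝ | p.2 ≤ T + 1} with hS₂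
  have hS₁meas : MeasurableSet S₁ :=
    hSmeas.inter (measurable_fst measurableSet_Iic)
  have hS₂meas : MeasurableSet S₂ :=
    hSmeas.inter (measurable_snd measurableSet_Iic)
  have hsub : S ⊆ S₁ ∪ S₂ := by
    rintro ⟨u, v⟩ hp
    by_cases hu : u ≤ x - T
    · exact Or.inl ⟨hp, hu⟩
    · refine Or.inr ⟨hp, ?_⟩
      have h2 : u + v ≤ x + 1 := hp.2
      simp only [Set.mem_setOf_eq]
      push_neg at hu
      linarith
  have hbound1 : P S₁ ≤ ENNReal.ofReal ε * P (add ⁻¹' Set.Ioi x) := by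
    rw [Measure.prod_apply hS₁meas,
      Measure.prod_apply (measurable_addfun measurableSet_Ioi)]
    rw [← lintegral_const_mul _
      (measurable_measure_prodMk_left (measurable_addfun measurableSet_Ioi))]
    refine lintegral_mono (fun u => ?_)
    have hslice2 : (Prod.mk u ⁻¹' (add ⁻¹' Set.Ioi x)) = Set.Ioi (x - u) := by
      ext v; simp only [Set.mem_preimage, Set.mem_Ioi, hadd]; constructor <;> intro h <;> linarith
    rw [hslice2]
    by_cases hu : u ≤ x - T
    · have hslice1 : (Prod.mk u ⁻¹' S₁) = Set.Ioc (x - u) (x + 1 - u) := by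
        ext v
        simp only [hS₁, hS, Set.mem_preimage, Set.mem_inter_iff, Set.mem_Ioc,
          Set.mem_setOf_eq, hadd]
        constructor
        · rintro ⟨⟨h1, h2⟩, _⟩; exact ⟨by linarith, by linarith⟩
        · rintro ⟨h1, h2⟩; exact ⟨⟨by linarith, by linarith⟩, hu⟩
      rw [hslice1]
      have : x - u + 1 = x + 1 - u := by ring
      rw [← this]
      exact hT (x - u) (by linarith)
    · have hslice1 : (Prod.mk u ⁻¹' S₁) = ∅ := by
        ext v
        simp only [hS₁, hS, Set.mem_preimage, Set.mem_inter_iff, Set.mem_setOf_eq,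
          Set.mem_empty_iff_false, iff_false, not_and]
        intro _; exact hu
      rw [hslice1]
      simp
  have hbound2 : P S₂ ≤ ENNReal.ofReal ε * F (Set.Ioi (x - T - 1)) := by
    rw [Measure.prod_apply_symm hS₂meas]
    calc ∫⁻ v, F ((fun u => (u, v)) ⁻¹' S₂) ∂F
        ≤ ∫⁻ _, ENNReal.ofReal ε * F (Set.Ioi (x - T - 1)) ∂F := by
          refine lintegral_mono (fun v => ?_)
          by_cases hv : v ≤ T + 1
          · have hslice : ((fun u => (u, v)) ⁻¹' S₂) = Set.Ioc (x - v) (x + 1 - v) := by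
              ext u
              simp only [hS₂, hS, Set.mem_preimage, Set.mem_inter_iff, Set.mem_Ioc,
                Set.mem_setOf_eq, hadd]
              constructor
              · rintro ⟨⟨h1, h2⟩, _⟩; exact ⟨by linarith, by linarith⟩
              · rintro ⟨h1, h2⟩; exact ⟨⟨by linarith, by linarith⟩, hv⟩
            rw [hslice]
            have e : x - v + 1 = x + 1 - v := by ring
            calc F (Set.Ioc (x - v) (x + 1 - v))
                ≤ ENNReal.ofReal ε * F (Set.Ioi (x - v)) := by
                  rw [← e]; exact hT (x - v) (by linarith)
              _ ≤ ENNReal.ofReal ε * F (Set.Ioi (x - T - 1)) := by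
                  exact mul_le_mul_right
                    (measure_mono (Set.Ioi_subset_Ioi (by linarith))) _
          · have hslice : ((fun u => (u, v)) ⁻¹' S₂) = ∅ := by
              ext u
              simp only [hS₂, hS, Set.mem_preimage, Set.mem_inter_iff, Set.mem_setOf_eq,
                Set.mem_empty_iff_false, iff_false, not_and]
              intro _; exact hv
            rw [hslice]; simp
      _ = ENNReal.ofReal ε * F (Set.Ioi (x - T - 1)) := by
          rw [lintegral_const]
          simp
  calc (mconv F F) (Set.Ioc x (x+1)) = P S := mconv_apply F F measurableSet_Ioc
    _ ≤ P S₁ + P S₂ := le_trans (measure_mono hsub) (measure_union_le _ _)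
    _ ≤ ENNReal.ofReal ε * P (add ⁻¹' Set.Ioi x) + ENNReal.ofReal ε * F (Set.Ioi (x - T - 1)) :=
        add_le_add hbound1 hbound2
    _ = ENNReal.ofReal ε * ((mconv F F) (Set.Ioi x) + F (Set.Ioi (x - T - 1))) := by
        rw [mconv_apply F F measurableSet_Ioi, mul_add]

/-- tail positivity of the convolution -/
lemma tail_mconv_pos (F : Measure ℝ) [IsProbabilityMeasure F] (hpos : ∀ x, 0 < tail F x) :
    ∀ x, 0 < tail (mconv F F) x := by
  intro x
  have h := tail_mconv_ge F x 0
  rw [add_zero] at h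
  exact lt_of_lt_of_le (mul_pos (hpos x) (hpos 0)) h

/-- Forward direction: if F is long-tailed then F*F is long-tailed. -/
lemma forward_dir (F : Measure ℝ) [IsProbabilityMeasure F] (hpos : ∀ x, 0 < tail F x)
    (hLT : LongTailed F) : LongTailed (mconv F F) := by
  set G := mconv F F with hG
  have gpos : ∀ x, 0 < tail G x := tail_mconv_pos F hpos
  rw [longTailed_iff G gpos]
  rw [NormedAddCommGroup.tendsto_nhds_zero]
  intro ε hε
  set C : ℝ := 1 + 2 / tail F 0 with hC
  have hCpos : 0 < C := by have := hpos 0; positivity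
  set ε' : ℝ := ε / (2 * C) with hε'def
  have hε' : 0 < ε' := by positivity
  -- from long-tailedness of F
  have hr : Tendsto (fun t => intv F t (t + 1) / tail F t) atTop (nhds 0) :=
    (longTailed_iff F hpos).mp hLT
  have hev : ∀ᶠ t in atTop, intv F t (t + 1) / tail F t < ε' := hr (Iio_mem_nhds hε')
  obtain ⟨T, hT⟩ := eventually_atTop.mp hev
  -- ENNReal form
  have hTenn : ∀ t, T ≤ t → F (Set.Ioc t (t+1)) ≤ ENNReal.ofReal ε' * F (Set.Ioi t) := by
    intro t ht
    have h1 : intv F t (t+1) ≤ ε' * tail F t := by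
      have := (hT t ht).le
      rw [div_le_iff₀ (hpos t)] at this
      linarith [this]
    calc F (Set.Ioc t (t+1)) = ENNReal.ofReal (intv F t (t+1)) := by
          rw [intv, ENNReal.ofReal_toReal (measure_ne_top _ _)]
      _ ≤ ENNReal.ofReal (ε' * tail F t) := ENNReal.ofReal_le_ofReal h1
      _ = ENNReal.ofReal ε' * ENNReal.ofReal (tail F t) := ENNReal.ofReal_mul hε'.le
      _ = ENNReal.ofReal ε' * F (Set.Ioi t) := by
          rw [tail, ENNReal.ofReal_toReal (measure_ne_top _ _)]
  -- the shift bound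
  set k : ℕ := ⌈T + 1⌉₊ with hk
  have hkT : T + 1 ≤ (k : ℝ) := Nat.le_ceil _
  have hshift : Tendsto (fun x => tail F x / tail F (x - k)) atTop (nhds 1) :=
    tail_shift F hpos hLT k
  have hshift2 : ∀ᶠ x in atTop, (1:ℝ)/2 < tail F x / tail F (x - k) :=
    hshift (Ioi_mem_nhds (by norm_num))
  filter_upwards [hshift2, eventually_ge_atTop (2*T + 1)] with x hsh hx
  -- main estimate
  have hmain := conv_intv_bound F hTenn hx
  have htoReal : intv G x (x+1) ≤ ε' * (tail G x + tail F (x - T - 1)) := by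
    have h2 : ((ENNReal.ofReal ε' * (G (Set.Ioi x) + F (Set.Ioi (x - T - 1))))).toReal
        = ε' * (tail G x + tail F (x - T - 1)) := by
      rw [ENNReal.toReal_mul, ENNReal.toReal_ofReal hε'.le,
        ENNReal.toReal_add (measure_ne_top _ _) (measure_ne_top _ _)]
      rfl
    have := ENNReal.toReal_mono (by
      exact ENNReal.mul_ne_top ENNReal.ofReal_ne_top
        (ENNReal.add_ne_top.mpr ⟨measure_ne_top _ _, measure_ne_top _ _⟩)) hmain
    rw [h2] at this
    exact this
  have hfshift : tail F (x - T - 1) ≤ 2 * tail F x := by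
    have h1 : tail F (x - T - 1) ≤ tail F (x - k) :=
      tail_antitone F (by linarith)
    have h2 : tail F (x - k) < 2 * tail F x := by
      have hb := hpos (x - k)
      rw [div_lt_div_iff₀ (by norm_num) hb] at hsh
      linarith
    linarith
  have hftail : tail F x * tail F 0 ≤ tail G x := by
    have := tail_mconv_ge F x 0
    rwa [add_zero] at this
  have hfG : tail F x ≤ tail G x / tail F 0 := by
    rw [le_div_iff₀ (hpos 0)]
    exact hftail
  have hfinal : intv G x (x+1) ≤ ε' * C * tail G x := by
    calc intv G x (x+1) ≤ ε' * (tail G x + tail F (x - T - 1)) := htoReal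
      _ ≤ ε' * (tail G x + 2 * (tail G x / tail F 0)) := by
          have : tail F (x - T - 1) ≤ 2 * (tail G x / tail F 0) := by
            calc tail F (x - T - 1) ≤ 2 * tail F x := hfshift
              _ ≤ 2 * (tail G x / tail F 0) := by linarith
          nlinarith [hε'.le]
      _ = ε' * C * tail G x := by
          rw [hC]; field_simp
  have hq : intv G x (x+1) / tail G x ≤ ε' * C := by
    rw [div_le_iff₀ (gpos x)]
    exact hfinal
  have hεC : ε' * C = ε / 2 := by
    rw [hε'def]; field_simp
  rw [Real.norm_eq_abs, abs_of_nonneg (div_nonneg (intv_nonneg _ _ _) (tail_nonneg _ _))]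
  calc intv G x (x+1) / tail G x ≤ ε' * C := hq
    _ = ε / 2 := hεC
    _ < ε := by linarith

/-- Backward direction: F in OS and F*F long-tailed imply F long-tailed. -/
lemma backward_dir (F : Measure ℝ) [IsProbabilityMeasure F] (hpos : ∀ x, 0 < tail F x)
    (hOS : ∃ M : ℝ, ∀ᶠ x in atTop, tail (mconv F F) x ≤ M * tail F x)
    (hLTG : LongTailed (mconv F F)) : LongTailed F := by
  set G := mconv F F with hGdef
  have gpos : ∀ x, 0 < tail G x := tail_mconv_pos F hpos
  obtain ⟨M, hM⟩ := hOS
  obtain ⟨T₀, hT₀⟩ := eventually_atTop.mp hM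
  have hMpos : 0 < M := by
    have h1 := hT₀ T₀ le_rfl
    have h2 := gpos T₀
    have h3 := hpos T₀
    nlinarith
  obtain ⟨a, ha0, hp⟩ := exists_pos_intv F (hpos 0)
  set p : ℝ := intv F a (a + 1/2) with hpdef
  set hGfun : ℝ → ℝ := fun t => intv G t (t + 1) / tail G t with hGfun_def
  have hG0 : Tendsto hGfun atTop (nhds 0) := (longTailed_iff G gpos).mp hLTG
  have hGnn : ∀ t, 0 ≤ hGfun t := fun t => div_nonneg (intv_nonneg _ _ _) (tail_nonneg _ _)
  rw [longTailed_iff F hpos]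
  set B : ℝ → ℝ := fun x => M / p * (hGfun (x + a) + hGfun (x + a + 1/2)) with hB
  have hBlim : Tendsto B atTop (nhds 0) := by
    have h1 : Tendsto (fun x => hGfun (x + a)) atTop (nhds 0) :=
      hG0.comp (tendsto_atTop_add_const_right atTop a tendsto_id)
    have h2 : Tendsto (fun x => hGfun (x + a + 1/2)) atTop (nhds 0) :=
      hG0.comp (tendsto_atTop_add_const_right atTop (a + 1/2) (tendsto_id)) |>.congr
        (fun x => by simp only [Function.comp_apply, id_eq]; ring_nf)
    have h3 := (h1.add h2).const_mul (M / p)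
    rw [add_zero, mul_zero] at h3
    exact h3
  refine squeeze_zero' (Eventually.of_forall fun x =>
    div_nonneg (intv_nonneg _ _ _) (tail_nonneg _ _)) ?_ hBlim
  filter_upwards [eventually_ge_atTop T₀] with x hx
  -- the pointwise bound
  have hg1 : tail G (x + a) ≤ M * tail F x := by
    calc tail G (x + a) ≤ M * tail F (x + a) := hT₀ (x + a) (by linarith)
      _ ≤ M * tail F x := by
          exact mul_le_mul_of_nonneg_left (tail_antitone F (by linarith)) hMpos.le
  have hg2 : tail G (x + a + 1/2) ≤ M * tail F x := by
    calc tail G (x + a + 1/2) ≤ M * tail F (x + a + 1/2) := hT₀ _ (by linarith)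
      _ ≤ M * tail F x := by
          exact mul_le_mul_of_nonneg_left (tail_antitone F (by linarith)) hMpos.le
  have k1 : p * intv F x (x + 1/2) ≤ intv G (x + a) (x + a + 1) := by
    have h := intv_mconv_ge F a (a + 1/2) x (x + 1/2)
    have e1 : a + x = x + a := by ring
    have e2 : a + 1/2 + (x + 1/2) = x + a + 1 := by ring
    rw [e1, e2] at h
    exact h
  have k2 : p * intv F (x + 1/2) (x + 1) ≤ intv G (x + a + 1/2) (x + a + 1/2 + 1) := by
    have h := intv_mconv_ge F a (a + 1/2) (x + 1/2) (x + 1)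
    have e1 : a + (x + 1/2) = x + a + 1/2 := by ring
    have e2 : a + 1/2 + (x + 1) = x + a + 1/2 + 1 := by ring
    rw [e1, e2] at h
    exact h
  have m1 : intv G (x + a) (x + a + 1) = hGfun (x + a) * tail G (x + a) := by
    rw [hGfun_def]
    exact (div_mul_cancel₀ _ (gpos (x + a)).ne').symm
  have m2 : intv G (x + a + 1/2) (x + a + 1/2 + 1)
      = hGfun (x + a + 1/2) * tail G (x + a + 1/2) := by
    rw [hGfun_def]
    exact (div_mul_cancel₀ _ (gpos (x + a + 1/2)).ne').symm
  have split : intv F x (x + 1) = intv F x (x + 1/2) + intv F (x + 1/2) (x + 1) :=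
    intv_split F (by linarith) (by linarith)
  have key : p * intv F x (x + 1) ≤ (hGfun (x + a) + hGfun (x + a + 1/2)) * (M * tail F x) := by
    rw [split, mul_add, add_mul]
    refine add_le_add ?_ ?_
    · calc p * intv F x (x + 1/2) ≤ intv G (x + a) (x + a + 1) := k1
        _ = hGfun (x + a) * tail G (x + a) := m1
        _ ≤ hGfun (x + a) * (M * tail F x) := by
            exact mul_le_mul_of_nonneg_left hg1 (hGnn _)
    · calc p * intv F (x + 1/2) (x + 1) ≤ intv G (x + a + 1/2) (x + a + 1/2 + 1) := k2
        _ = hGfun (x + a + 1/2) * tail G (x + a + 1/2) := m2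
        _ ≤ hGfun (x + a + 1/2) * (M * tail F x) := by
            exact mul_le_mul_of_nonneg_left hg2 (hGnn _)
  rw [div_le_iff₀ (hpos x)]
  have goal_eq : B x = M / p * (hGfun (x + a) + hGfun (x + a + 1/2)) := rfl
  rw [goal_eq, div_mul_eq_mul_div, div_mul_eq_mul_div, le_div_iff₀ hp]
  nlinarith [key]

/-- If F belongs to the class OS, then F is long-tailed iff F*F is long-tailed. -/
theorem stmt12 (F : Measure ℝ) [IsProbabilityMeasure F] (hOS : OSClass F) :
    LongTailed F ↔ LongTailed (mconv F F) := by
  obtain ⟨hpos, hM⟩ := hOS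
  exact ⟨forward_dir F hpos, backward_dir F hpos hM⟩
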